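/- Let θ ∈ ℝ, let c > 0, and let f(λ) = (1/2π)|1 + θe^{iλ}|² be the spectral density of the MA(1) process z_t = ε_t + θ ε_{t−1}. Then for any s ∈ ℂ with Im s > 0, the equation z = −1/s + (1/2π)∫_0^{2π}[c·s + (2πf(λ))^{-1}]^{-1} dλ is equivalent to z = −1/s + 1/(cs) + (1/(c²s²)) · 1/√((1/(cs) + 1 + θ²)² − 4θ²), where √· is the complex square root with nonnegative imaginary part. In particular, when θ = 0 this reduces to z = −1/s + 1/(cs + 1), the equation characterising the standard Marčenko-Pastur law of index c. -/

import Mathlib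

open MeasureTheory Complex Real Filter Topology

/-- The complex square root with nonnegative imaginary part. -/
noncomputable def sqrtIm (z : ℂ) : ℂ :=
  if 0 ≤ (z ^ (1 / 2 : ℂ)).im then z ^ (1 / 2 : ℂ) else -(z ^ (1 / 2 : ℂ))

lemma sqrtIm_sq {z : ℂ} (hz : z ≠ 0) : (sqrtIm z) ^ 2 = z := by
  have h : (z ^ (1/2 : ℂ)) ^ 2 = z := by
    rw [sq, ← Complex.cpow_add _ _ hz]
    norm_num
  unfold sqrtIm
  split <;> simp [h, neg_sq]

lemma sqrtIm_im_nonneg (z : ℂ) : 0 ≤ (sqrtIm z).im := by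
  unfold sqrtIm
  split
  case isTrue h => exact h
  case isFalse h => simp only [neg_im]; linarith [lt_of_not_ge h]

lemma sqrtIm_of_neg_im {w : ℂ} (hw : w.im < 0) : sqrtIm (w ^ 2) = -w := by
  have hwne : w ≠ 0 := fun h => by simp [h] at hw
  have hz : (w:ℂ)^2 ≠ 0 := pow_ne_zero _ hwne
  have h2 : (sqrtIm (w^2))^2 = w^2 := sqrtIm_sq hz
  have : (sqrtIm (w^2) - w) * (sqrtIm (w^2) + w) = 0 := by linear_combination h2
  rcases mul_eq_zero.1 this with h | h
  · have heq : sqrtIm (w^2) = w := sub_eq_zero.1 h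
    have := sqrtIm_im_nonneg (w^2)
    rw [heq] at this; linarith
  · exact add_eq_zero_iff_eq_neg.1 h

lemma intA {p : ℂ} (hp : ‖p‖ < 1) :
    ∫ lam in (0:ℝ)..(2*π), (Complex.exp (lam * I) * I) * (Complex.exp (lam * I) - p)⁻¹
      = 2 * π * I := by
  have h := circleIntegral.integral_sub_inv_of_mem_ball
    (c := (0:ℂ)) (R := 1) (w := p) (by simpa using hp)
  simpa [circleIntegral, deriv_circleMap, circleMap, smul_eq_mul] using h

lemma intB {q : ℂ} (hq : 1 < ‖q‖) :
    ∫ lam in (0:ℝ)..(2*π), (Complex.exp (lam * I) * I) * (Complex.exp (lam * I) - q)⁻¹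
      = 0 := by
  have h := circleIntegral_eq_zero_of_differentiable_on_off_countable
    (R := 1) (c := (0:ℂ)) (f := fun z => (z - q)⁻¹) zero_le_one
    (Set.countable_empty)
    (by
      apply ContinuousOn.inv₀ (by fun_prop)
      intro z hz
      simp only [Metric.mem_closedBall, dist_zero_right] at hz
      intro h0
      have hzq : z = q := sub_eq_zero.1 h0
      rw [hzq] at hz
      exact absurd hz (by simpa using not_le.2 hq))
    (by
      intro z hz
      apply DifferentiableAt.inv (by fun_prop)
      intro h0
      have hzq : z = q := sub_eq_zero.1 h0
      have hz' := hz.1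
      simp only [Metric.mem_ball, dist_zero_right, hzq] at hz'
      exact absurd hz' (by simpa using not_lt.2 hq.le))
  simpa [circleIntegral, deriv_circleMap, circleMap, smul_eq_mul] using h

lemma denom_im (θ : ℝ) (B : ℂ) (lam : ℝ) :
    (B + 2*(θ:ℂ)*((Real.cos lam : ℝ):ℂ)).im = B.im := by simp

lemma denom_ne {B : ℂ} (θ : ℝ) (hB : B.im < 0) (lam : ℝ) :
    B + 2*(θ:ℂ)*((Real.cos lam : ℝ):ℂ) ≠ 0 := by
  intro h
  have h2 := denom_im θ B lam
  rw [h] at h2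
  simp at h2
  exact absurd h2.symm hB.ne

lemma denom_cont {B : ℂ} (θ : ℝ) (hB : B.im < 0) :
    Continuous fun lam : ℝ => (B + 2*(θ:ℂ)*((Real.cos lam : ℝ):ℂ))⁻¹ := by
  apply Continuous.inv₀ (by fun_prop) (denom_ne θ hB)

lemma im_pos_integral {B : ℂ} (θ : ℝ) (hB : B.im < 0) :
    0 < (∫ lam in (0:ℝ)..(2*π), (B + 2*(θ:ℂ)*((Real.cos lam : ℝ):ℂ))⁻¹).im := by
  have hint : IntervalIntegrable (fun lam : ℝ => (B + 2*(θ:ℂ)*((Real.cos lam : ℝ):ℂ))⁻¹)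
      volume 0 (2*π) := (denom_cont θ hB).intervalIntegrable _ _
  have hswap := ContinuousLinearMap.intervalIntegral_comp_comm Complex.imCLM hint
  simp only [Complex.imCLM_apply] at hswap
  rw [← hswap]
  apply intervalIntegral.intervalIntegral_pos_of_pos_on
  · exact ((Complex.continuous_im.comp (denom_cont θ hB)).intervalIntegrable _ _)
  · intro x hx
    rw [Complex.inv_im]
    apply div_pos
    · rw [denom_im]; linarith
    · exact Complex.normSq_pos.2 (denom_ne θ hB x)
  · positivity

lemma frac (θ c a b u : ℂ) (hθ : θ ≠ 0) (hc : c ≠ 0) (ha : a ≠ 0) (hb : b ≠ 0)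
    (hu : u ≠ 0) (hba : b - a = c) :
    (θ*a*b/u)⁻¹ = (I*θ*c)⁻¹ * ((u*I)*a⁻¹ - (u*I)*b⁻¹) := by
  have h : (u*I)*a⁻¹ - (u*I)*b⁻¹ = u*I*(a⁻¹ - b⁻¹) := by ring
  rw [h, inv_sub_inv ha hb, hba, inv_div, mul_inv, mul_inv, Complex.inv_I]
  rw [div_eq_iff (by exact mul_ne_zero (mul_ne_zero hθ ha) hb)]
  field_simp
  linear_combination Complex.I_sq

lemma pointwise (θ : ℝ) (B p q : ℂ) (hθ : θ ≠ 0) (hpq : p * q = 1)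
    (hsum : (θ:ℂ) * (p + q) = -B) (hp : ‖p‖ < 1) (hq : 1 < ‖q‖)
    (lam : ℝ) :
    (B + 2*(θ:ℂ)*((Real.cos lam : ℝ):ℂ))⁻¹
      = (I*(θ:ℂ)*(p-q))⁻¹ *
        ((Complex.exp (lam*I) * I) * (Complex.exp (lam*I) - p)⁻¹
          - (Complex.exp (lam*I) * I) * (Complex.exp (lam*I) - q)⁻¹) := by
  have hθc : (θ:ℂ) ≠ 0 := Complex.ofReal_ne_zero.2 hθ
  have hp0 : p ≠ 0 := by
    intro h; rw [h, zero_mul] at hpq; exact zero_ne_one hpq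
  have hq' : q = p⁻¹ := by field_simp; linear_combination hpq
  subst hq'
  have hu0 : Complex.exp (lam*I) ≠ 0 := Complex.exp_ne_zero _
  have huabs : ‖Complex.exp (lam*I)‖ = 1 := by
    simpa using Complex.norm_exp_ofReal_mul_I lam
  have hup : Complex.exp (lam*I) - p ≠ 0 := by
    intro h; rw [sub_eq_zero] at h; rw [h] at huabs; exact hp.ne huabs
  have huq : Complex.exp (lam*I) - p⁻¹ ≠ 0 := by
    intro h; rw [sub_eq_zero] at h; rw [h] at huabs; exact hq.ne' huabs
  have hppq : p - p⁻¹ ≠ 0 := by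
    have h2 : ‖p‖ < ‖p⁻¹‖ := hp.trans hq
    intro h; rw [sub_eq_zero] at h; rw [← h] at h2; exact lt_irrefl _ h2
  have hcos : 2*((Real.cos lam : ℝ):ℂ) = Complex.exp (lam*I) + (Complex.exp (lam*I))⁻¹ := by
    rw [Complex.ofReal_cos, Complex.two_cos, ← Complex.exp_neg]
    ring_nf
  have hBval : B = -((θ:ℂ) * (p + p⁻¹)) := by linear_combination hsum
  have hrw : B + 2*(θ:ℂ)*((Real.cos lam : ℝ):ℂ)
      = (θ:ℂ) * (Complex.exp (lam*I) - p) * (Complex.exp (lam*I) - p⁻¹)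
          / Complex.exp (lam*I) := by
    rw [hBval]
    have : B = B := rfl
    rw [mul_comm (2:ℂ) (θ:ℂ), mul_assoc, hcos]
    field_simp
    ring
  rw [hrw]
  exact frac (θ:ℂ) (p - p⁻¹) _ _ _ hθc hppq hup huq hu0 (by ring)

lemma key_core (θ : ℝ) (B p q : ℂ) (hB : B.im < 0) (hθ : θ ≠ 0) (hpq : p * q = 1)
    (hsum : (θ:ℂ) * (p + q) = -B) (hp : ‖p‖ < 1) (hq : 1 < ‖q‖) :
    ∫ lam in (0:ℝ)..(2*π), (B + 2*(θ:ℂ)*((Real.cos lam : ℝ):ℂ))⁻¹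
      = -(2*π) / sqrtIm (B^2 - 4*(θ:ℂ)^2) := by
  have hθc : (θ:ℂ) ≠ 0 := Complex.ofReal_ne_zero.2 hθ
  have hpne : ∀ lam : ℝ, Complex.exp (lam*I) - p ≠ 0 := by
    intro lam h
    have huabs : ‖Complex.exp (lam*I)‖ = 1 := by
      simpa using Complex.norm_exp_ofReal_mul_I lam
    rw [sub_eq_zero] at h; rw [h] at huabs; exact hp.ne huabs
  have hqne : ∀ lam : ℝ, Complex.exp (lam*I) - q ≠ 0 := by
    intro lam h
    have huabs : ‖Complex.exp (lam*I)‖ = 1 := by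
      simpa using Complex.norm_exp_ofReal_mul_I lam
    rw [sub_eq_zero] at h; rw [h] at huabs; exact hq.ne' huabs
  have hg1 : Continuous fun lam : ℝ =>
      (Complex.exp (lam*I) * I) * (Complex.exp (lam*I) - p)⁻¹ := by
    apply Continuous.mul (by fun_prop)
    exact Continuous.inv₀ (by fun_prop) (hpne)
  have hg2 : Continuous fun lam : ℝ =>
      (Complex.exp (lam*I) * I) * (Complex.exp (lam*I) - q)⁻¹ := by
    apply Continuous.mul (by fun_prop)
    exact Continuous.inv₀ (by fun_prop) (hqne)
  have hval : (∫ lam in (0:ℝ)..(2*π), (B + 2*(θ:ℂ)*((Real.cos lam : ℝ):ℂ))⁻¹)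
      = (I*(θ:ℂ)*(p-q))⁻¹ * (2*π*I - 0) := by
    rw [← intA hp, ← intB hq, ← intervalIntegral.integral_sub
        (hg1.intervalIntegrable _ _) (hg2.intervalIntegrable _ _),
      ← intervalIntegral.integral_const_mul]
    apply intervalIntegral.integral_congr
    intro lam _
    exact pointwise θ B p q hθ hpq hsum hp hq lam
  have hpq0 : p - q ≠ 0 := by
    have h2 : ‖p‖ < ‖q‖ := hp.trans hq
    intro h; rw [sub_eq_zero] at h; rw [← h] at h2; exact lt_irrefl _ h2
  have hR0 : (θ:ℂ)*(p-q) ≠ 0 := mul_ne_zero hθc hpq0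
  have hval2 : (I*(θ:ℂ)*(p-q))⁻¹ * (2*π*I - 0) = 2*π / ((θ:ℂ)*(p-q)) := by
    rw [sub_zero, mul_inv, mul_inv, Complex.inv_I]
    field_simp
    linear_combination (-1:ℂ) * Complex.I_sq
  rw [hval2] at hval
  -- now deduce the imaginary part sign
  have hpos := im_pos_integral θ hB
  rw [hval] at hpos
  have hIm : ((θ:ℂ)*(p-q)).im < 0 := by
    by_contra hcon
    push_neg at hcon
    have h1 : (2*(π:ℂ) / ((θ:ℂ)*(p-q))).im = 2*π * (((θ:ℂ)*(p-q))⁻¹).im := by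
      rw [div_eq_mul_inv]
      have : (2*(π:ℂ)) = ((2*π : ℝ) : ℂ) := by push_cast; ring
      rw [this, Complex.im_ofReal_mul]
    rw [h1, Complex.inv_im] at hpos
    have : -((θ:ℂ)*(p-q)).im / Complex.normSq ((θ:ℂ)*(p-q)) ≤ 0 := by
      apply div_nonpos_of_nonpos_of_nonneg
      · linarith
      · exact Complex.normSq_nonneg _
    nlinarith [Real.pi_pos]
  have hsq : ((θ:ℂ)*(p-q))^2 = B^2 - 4*(θ:ℂ)^2 := by
    linear_combination ((θ:ℂ)*(p+q) - B) * hsum + (-4*(θ:ℂ)^2) * hpq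
  rw [← hsq, sqrtIm_of_neg_im hIm, div_neg, neg_div, neg_neg, hval]

lemma abs_unit {θ : ℝ} {B r r' : ℂ} (hB : B.im < 0) (hθ : θ ≠ 0)
    (hpq : r * r' = 1) (hsum : (θ:ℂ) * (r + r') = -B) : ‖r‖ ≠ 1 := by
  intro h1
  have hr0 : r ≠ 0 := by intro h; rw [h] at h1; simp at h1
  have hr' : r' = (starRingEnd ℂ) r := by
    have h2 : r' = r⁻¹ := by
      field_simp
      linear_combination hpq
    rw [h2, Complex.inv_def, Complex.normSq_eq_norm_sq, h1]
    simp
  have him : ((θ:ℂ) * (r + r')).im = 0 := by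
    rw [hr', Complex.mul_im]
    simp [Complex.add_im, Complex.conj_im]
  rw [hsum] at him
  simp at him
  exact absurd him hB.ne

lemma key (θ : ℝ) (B : ℂ) (hB : B.im < 0) :
    ∫ lam in (0:ℝ)..(2*π), (B + 2*(θ:ℂ)*((Real.cos lam : ℝ):ℂ))⁻¹
      = -(2*π) / sqrtIm (B^2 - 4*(θ:ℂ)^2) := by
  have hB0 : B ≠ 0 := by intro h; rw [h] at hB; simp at hB
  rcases eq_or_ne θ 0 with rfl | hθ
  · simp only [Complex.ofReal_zero, mul_zero, zero_mul, mul_comm, add_zero]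
    rw [intervalIntegral.integral_const]
    have h1 : sqrtIm (B^2 - 4*(0:ℂ)^2) = -B := by
      rw [show B^2 - 4*(0:ℂ)^2 = B^2 by ring]
      exact sqrtIm_of_neg_im hB
    rw [h1, div_neg, neg_div, neg_neg]
    rw [sub_zero, Complex.real_smul]
    push_cast
    rw [div_eq_mul_inv]
  · have hθc : (θ:ℂ) ≠ 0 := Complex.ofReal_ne_zero.2 hθ
    have hv : B^2 - 4*(θ:ℂ)^2 ≠ 0 := by
      intro h
      have : (B - 2*θ) * (B + 2*θ) = 0 := by linear_combination h
      rcases mul_eq_zero.1 this with h2 | h2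
      · have : B = 2*θ := by linear_combination h2
        rw [this] at hB; simp at hB
      · have : B = -(2*θ) := by linear_combination h2
        rw [this] at hB; simp at hB
    set d := sqrtIm (B^2 - 4*(θ:ℂ)^2) with hd_def
    have hd : d^2 = B^2 - 4*(θ:ℂ)^2 := sqrtIm_sq hv
    set r₁ := (-B+d)/(2*θ) with hr1
    set r₂ := (-B-d)/(2*θ) with hr2
    have hprod : r₁ * r₂ = 1 := by
      rw [hr1, hr2]
      field_simp
      linear_combination -hd
    have hsum : (θ:ℂ) * (r₁ + r₂) = -B := by
      rw [hr1, hr2]; field_simp; ring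
    have habs1 : ‖r₁‖ ≠ 1 := abs_unit hB hθ hprod hsum
    have habs2 : ‖r₂‖ ≠ 1 := abs_unit hB hθ (by rw [mul_comm]; exact hprod)
      (by rw [add_comm]; exact hsum)
    have habsmul : ‖r₁‖ * ‖r₂‖ = 1 := by
      rw [← norm_mul, hprod, norm_one]
    have hr10 : ‖r₁‖ ≠ 0 := by
      intro h; rw [h, zero_mul] at habsmul; exact zero_ne_one habsmul
    rcases lt_or_gt_of_ne habs1 with h | h
    · have h2 : 1 < ‖r₂‖ := by
        rcases lt_or_ge 1 ‖r₂‖ with h2 | h2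
        · exact h2
        · exfalso; nlinarith [norm_nonneg r₁, norm_nonneg r₂]
      exact key_core θ B r₁ r₂ hB hθ hprod hsum h h2
    · have h2 : ‖r₂‖ < 1 := by
        rcases lt_or_ge ‖r₂‖ 1 with h2 | h2
        · exact h2
        · exfalso; nlinarith [norm_nonneg r₁, norm_nonneg r₂]
      exact key_core θ B r₂ r₁ hB hθ (by rw [mul_comm]; exact hprod)
        (by rw [add_comm]; exact hsum) h2 h

lemma cos_one_null : volume {x : ℝ | Real.cos x = 1} = 0 := by
  have hcount : Set.Countable {x : ℝ | Real.cos x = 1} := by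
    have hsub : {x : ℝ | Real.cos x = 1} ⊆ Set.range (fun n : ℤ => (n:ℝ) * (2*π)) := by
      intro x hx
      rcases (Real.cos_eq_one_iff x).1 hx with ⟨n, hn⟩
      exact ⟨n, hn⟩
    exact Set.Countable.mono hsub (Set.countable_range _)
  exact hcount.measure_zero _

lemma cos_neg_one_null : volume {x : ℝ | Real.cos x = -1} = 0 := by
  have hcount : Set.Countable {x : ℝ | Real.cos x = -1} := by
    have hsub : {x : ℝ | Real.cos x = -1} ⊆
        Set.range (fun n : ℤ => π + (n:ℝ) * (2*π)) := by
      intro x hx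
      rcases (Real.cos_eq_neg_one_iff).1 hx with ⟨n, hn⟩
      exact ⟨n, hn⟩
    exact Set.Countable.mono hsub (Set.countable_range _)
  exact hcount.measure_zero _

lemma weight_ae (θ : ℝ) : ∀ᵐ lam : ℝ, (1 + θ^2 + 2*θ*Real.cos lam) ≠ 0 := by
  rw [ae_iff]
  push_neg
  have hsub : {lam : ℝ | 1 + θ^2 + 2*θ*Real.cos lam = 0}
      ⊆ {x : ℝ | Real.cos x = 1} ∪ {x : ℝ | Real.cos x = -1} := by
    intro lam hlam
    simp only [Set.mem_setOf_eq] at hlam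
    have h1 : (1 - |θ|)^2 + 2*(|θ| + θ * Real.cos lam) = 0 := by
      nlinarith [_root_.sq_abs θ]
    have h2 : |θ * Real.cos lam| ≤ |θ| := by
      rw [abs_mul]
      calc |θ| * |Real.cos lam| ≤ |θ| * 1 := by
            exact mul_le_mul_of_nonneg_left (Real.abs_cos_le_one lam) (abs_nonneg θ)
        _ = |θ| := mul_one _
    have h3 : 0 ≤ |θ| + θ * Real.cos lam := by
      cases abs_le.1 h2 with
      | intro hl hr => linarith
    have h4 : (1 - |θ|)^2 = 0 ∧ |θ| + θ * Real.cos lam = 0 := by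
      constructor <;> nlinarith [sq_nonneg (1 - |θ|)]
    have hθ1 : |θ| = 1 := by nlinarith [h4.1]
    have h5 : θ * Real.cos lam = -1 := by rw [hθ1] at h4; linarith [h4.2]
    rcases abs_eq (by norm_num : (0:ℝ) ≤ 1) |>.1 hθ1 with h | h
    · right
      simp only [Set.mem_setOf_eq]
      rw [h] at h5; linarith
    · left
      simp only [Set.mem_setOf_eq]
      rw [h] at h5; linarith
  have hU : volume ({x : ℝ | Real.cos x = 1} ∪ {x : ℝ | Real.cos x = -1}) = 0 :=
    measure_union_null cos_one_null cos_neg_one_null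
  exact measure_mono_null hsub hU

lemma abs_ma1 (θ lam : ℝ) :
    ‖1 + (θ:ℂ) * Complex.exp (Complex.I * (lam:ℂ))‖^2
      = 1 + θ^2 + 2*θ*Real.cos lam := by
  rw [mul_comm Complex.I (lam:ℂ), Complex.exp_mul_I]
  rw [← Complex.ofReal_cos, ← Complex.ofReal_sin]
  rw [Complex.sq_norm, Complex.normSq_apply]
  simp only [Complex.add_re, Complex.add_im, Complex.one_re, Complex.one_im,
    Complex.mul_re, Complex.mul_im, Complex.ofReal_re, Complex.ofReal_im,
    Complex.I_re, Complex.I_im]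
  ring_nf
  nlinarith [Real.sin_sq_add_cos_sq lam]

lemma mp_pointwise (a : ℂ) (w : ℝ) (ha : a ≠ 0) (hw : ((w:ℝ):ℂ) ≠ 0)
    (h1 : a⁻¹ + ((w:ℝ):ℂ) ≠ 0) :
    (a + ((w:ℝ):ℂ)⁻¹)⁻¹ = a⁻¹ - (a⁻¹)^2 * (a⁻¹ + ((w:ℝ):ℂ))⁻¹ := by
  have h3 : a * (w:ℂ) + 1 ≠ 0 := by
    have := mul_ne_zero ha h1
    intro h
    apply this
    rw [mul_add]
    rw [mul_inv_cancel₀ ha]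
    linear_combination h
  have e1 : a + ((w:ℝ):ℂ)⁻¹ = (a * (w:ℂ) + 1)/(w:ℂ) := by
    field_simp
  have e2 : a⁻¹ + ((w:ℝ):ℂ) = (a * (w:ℂ) + 1)/a := by
    field_simp
    ring
  rw [e1, e2, inv_div, inv_div]
  rw [div_eq_iff h3]
  have h3' : 1 + (w:ℂ) * a ≠ 0 := by rw [add_comm, mul_comm]; exact h3
  field_simp
  have h3i : (1 + (w:ℂ)*a)⁻¹ * (1 + (w:ℂ)*a) = 1 := inv_mul_cancel₀ h3'
  linear_combination h3i

/-- The characterising equation of the LSD for an MA(1) process reduces to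
the explicit equation (11); for θ = 0 it is that of the Marčenko-Pastur law. -/
theorem ma1_lsd_equation
    (θ c : ℝ) (hc : 0 < c)
    -- the spectral density of the MA(1) process
    (f : ℝ → ℝ)
    (hf : ∀ lam : ℝ, f lam = (1 / (2 * π)) *
        (‖1 + (θ : ℂ) * Complex.exp (Complex.I * lam)‖) ^ 2)
    (s : ℂ) (hs : 0 < s.im) :
    ∀ z : ℂ,
      ((z = -s⁻¹ + ((1 / (2 * π) : ℝ) : ℂ) *
          ∫ lam in (0:ℝ)..(2 * π), ((c : ℂ) * s + ((2 * π * f lam : ℝ) : ℂ)⁻¹)⁻¹)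
        ↔
        (z = -s⁻¹ + ((c : ℂ) * s)⁻¹ +
          (1 / ((c : ℂ) ^ 2 * s ^ 2)) *
            (sqrtIm ((((c : ℂ) * s)⁻¹ + 1 + (θ : ℂ) ^ 2) ^ 2 - 4 * (θ : ℂ) ^ 2))⁻¹)) ∧
      -- in particular, for θ = 0 the equation characterises the standard
      -- Marčenko-Pastur law of index c
      (θ = 0 →
        ((z = -s⁻¹ + ((1 / (2 * π) : ℝ) : ℂ) *
            ∫ lam in (0:ℝ)..(2 * π), ((c : ℂ) * s + ((2 * π * f lam : ℝ) : ℂ)⁻¹)⁻¹)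
          ↔
          (z = -s⁻¹ + ((c : ℂ) * s + 1)⁻¹))) := by
  have hπ : (0:ℝ) < π := Real.pi_pos
  have haim : 0 < ((c:ℂ)*s).im := by
    rw [Complex.im_ofReal_mul]
    exact mul_pos hc hs
  have ha0 : (c:ℂ)*s ≠ 0 := by
    intro h; rw [h] at haim; simp at haim
  have hainv : (((c:ℂ)*s)⁻¹).im < 0 := by
    rw [Complex.inv_im]
    apply div_neg_of_neg_of_pos
    · linarith
    · exact Complex.normSq_pos.2 ha0
  have hBim : (((c:ℂ)*s)⁻¹ + 1 + (θ:ℂ)^2).im < 0 := by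
    have h2 : ((θ:ℂ)^2).im = 0 := by
      rw [show ((θ:ℂ))^2 = (((θ^2:ℝ)):ℂ) by push_cast; ring, Complex.ofReal_im]
    simp only [Complex.add_im, Complex.one_im, h2]
    linarith
  have hfw : ∀ lam : ℝ, (2*π*f lam : ℝ) = 1 + θ^2 + 2*θ*Real.cos lam := by
    intro lam
    rw [hf lam, abs_ma1 θ lam]
    field_simp
  -- the main integral computation
  have hInt : ((1 / (2 * π) : ℝ) : ℂ) *
      (∫ lam in (0:ℝ)..(2 * π), ((c : ℂ) * s + ((2 * π * f lam : ℝ) : ℂ)⁻¹)⁻¹)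
      = ((c:ℂ)*s)⁻¹ + (1 / ((c : ℂ) ^ 2 * s ^ 2)) *
          (sqrtIm ((((c : ℂ) * s)⁻¹ + 1 + (θ : ℂ) ^ 2) ^ 2 - 4 * (θ : ℂ) ^ 2))⁻¹ := by
    set B : ℂ := ((c:ℂ)*s)⁻¹ + 1 + (θ:ℂ)^2 with hB_def
    have hcong : (∫ lam in (0:ℝ)..(2 * π), ((c : ℂ) * s + ((2 * π * f lam : ℝ) : ℂ)⁻¹)⁻¹)
        = ∫ lam in (0:ℝ)..(2 * π),
            (((c:ℂ)*s)⁻¹ - (((c:ℂ)*s)⁻¹)^2 * (B + 2*(θ:ℂ)*((Real.cos lam : ℝ):ℂ))⁻¹) := by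
      apply intervalIntegral.integral_congr_ae
      filter_upwards [weight_ae θ] with lam hw _
      have hwc : ((1 + θ^2 + 2*θ*Real.cos lam : ℝ):ℂ) ≠ 0 := by
        exact_mod_cast Complex.ofReal_ne_zero.2 hw
      have hwim : ((1 + θ^2 + 2*θ*Real.cos lam : ℝ):ℂ).im = 0 := Complex.ofReal_im _
      rw [hfw lam]
      have hBw : B + 2*(θ:ℂ)*((Real.cos lam : ℝ):ℂ)
          = ((c:ℂ)*s)⁻¹ + ((1 + θ^2 + 2*θ*Real.cos lam : ℝ):ℂ) := by
        rw [hB_def]; push_cast; ring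
      rw [hBw]
      have hd1 : ((c:ℂ)*s)⁻¹ + ((1 + θ^2 + 2*θ*Real.cos lam : ℝ):ℂ) ≠ 0 := by
        intro h
        have := congrArg Complex.im h
        simp only [Complex.add_im, hwim, Complex.zero_im, add_zero] at this
        exact absurd this hainv.ne
      have hd2 : (c:ℂ)*s + (((1 + θ^2 + 2*θ*Real.cos lam : ℝ):ℂ))⁻¹ ≠ 0 := by
        intro h
        have := congrArg Complex.im h
        have himinv : ((((1 + θ^2 + 2*θ*Real.cos lam : ℝ):ℂ))⁻¹).im = 0 := by
          rw [Complex.inv_im, hwim]; simp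
        simp only [Complex.add_im, himinv, Complex.zero_im, add_zero] at this
        exact absurd this haim.ne'
      exact mp_pointwise ((c:ℂ)*s) (1 + θ^2 + 2*θ*Real.cos lam) ha0 hwc hd1
    rw [hcong]
    have hcont : Continuous fun lam : ℝ =>
        (((c:ℂ)*s)⁻¹)^2 * (B + 2*(θ:ℂ)*((Real.cos lam : ℝ):ℂ))⁻¹ :=
      continuous_const.mul (denom_cont θ hBim)
    rw [intervalIntegral.integral_sub (intervalIntegrable_const)
      (hcont.intervalIntegrable _ _), intervalIntegral.integral_const_mul,
      intervalIntegral.integral_const, key θ B hBim]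
    have hS0 : sqrtIm (B^2 - 4*(θ:ℂ)^2) ≠ 0 := by
      intro h
      have h2 : B^2 - 4*(θ:ℂ)^2 ≠ 0 := by
        intro h3
        have h4 : (B - 2*θ) * (B + 2*θ) = 0 := by linear_combination h3
        rcases mul_eq_zero.1 h4 with h5 | h5
        · have : B = 2*(θ:ℂ) := by linear_combination h5
          rw [this] at hBim; simp at hBim
        · have : B = -(2*(θ:ℂ)) := by linear_combination h5
          rw [this] at hBim; simp at hBim
      have := sqrtIm_sq h2
      rw [h] at this
      simp at this
      exact h2 this.symm
    have hsq2 : (1 / ((c : ℂ) ^ 2 * s ^ 2)) = (((c:ℂ)*s)⁻¹)^2 := by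
      rw [one_div, inv_pow, mul_pow]
    rw [hsq2]
    have hπc : ((π:ℝ):ℂ) ≠ 0 := Complex.ofReal_ne_zero.2 hπ.ne'
    set S : ℂ := sqrtIm (B^2 - 4*(θ:ℂ)^2) with hS_def
    clear_value S
    rw [sub_zero, Complex.real_smul]
    have e : ((1 / (2 * π) : ℝ) : ℂ) = (2*(π:ℂ))⁻¹ := by
      push_cast
      rw [one_div]
    have e2 : ((2*π : ℝ) : ℂ) = 2*(π:ℂ) := by push_cast; ring
    rw [e, e2]
    have hT : (2*(π:ℂ)) * (2*(π:ℂ))⁻¹ = 1 :=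
      mul_inv_cancel₀ (mul_ne_zero two_ne_zero hπc)
    linear_combination ((((c:ℂ)*s)⁻¹ + ((c:ℂ)*s)⁻¹^2 * S⁻¹)) * hT
  intro z
  have hiff1 : (z = -s⁻¹ + ((1 / (2 * π) : ℝ) : ℂ) *
        ∫ lam in (0:ℝ)..(2 * π), ((c : ℂ) * s + ((2 * π * f lam : ℝ) : ℂ)⁻¹)⁻¹)
      ↔ (z = -s⁻¹ + ((c : ℂ) * s)⁻¹ +
        (1 / ((c : ℂ) ^ 2 * s ^ 2)) *
          (sqrtIm ((((c : ℂ) * s)⁻¹ + 1 + (θ : ℂ) ^ 2) ^ 2 - 4 * (θ : ℂ) ^ 2))⁻¹) := by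
    rw [hInt, ← add_assoc]
  refine ⟨hiff1, ?_⟩
  intro h0
  subst h0
  apply hiff1.trans
  have harg : ((((c:ℂ)*s)⁻¹ + 1 + ((0:ℝ):ℂ)^2)^2 - 4*((0:ℝ):ℂ)^2)
      = (((c:ℂ)*s)⁻¹ + 1)^2 := by push_cast; ring
  have hG : (((c:ℂ)*s)⁻¹ + 1).im < 0 := by
    simp only [Complex.add_im, Complex.one_im, add_zero]
    exact hainv
  have hG0 : ((c:ℂ)*s)⁻¹ + 1 ≠ 0 := by
    intro h; have := congrArg Complex.im h; simp only [Complex.zero_im] at this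
    exact absurd this hG.ne
  have ha1 : (c:ℂ)*s + 1 ≠ 0 := by
    intro h; have := congrArg Complex.im h
    simp only [Complex.add_im, Complex.one_im, add_zero, Complex.zero_im] at this
    exact absurd this haim.ne'
  have hEq : -s⁻¹ + ((c : ℂ) * s)⁻¹ +
      (1 / ((c : ℂ) ^ 2 * s ^ 2)) *
        (sqrtIm ((((c : ℂ) * s)⁻¹ + 1 + ((0:ℝ) : ℂ) ^ 2) ^ 2 - 4 * ((0:ℝ) : ℂ) ^ 2))⁻¹
      = -s⁻¹ + ((c : ℂ) * s + 1)⁻¹ := by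
    rw [harg, sqrtIm_of_neg_im hG]
    have hsq2 : (1 / ((c : ℂ) ^ 2 * s ^ 2)) = (((c:ℂ)*s)⁻¹)^2 := by
      rw [one_div, inv_pow, mul_pow]
    rw [hsq2]
    have hA : ((c:ℂ)*s)⁻¹ + 1 = (1 + (c:ℂ)*s)/((c:ℂ)*s) := by
      rw [div_eq_mul_inv, add_mul, one_mul, mul_inv_cancel₀ ha0]
    have h1A : 1 + (c:ℂ)*s ≠ 0 := by
      intro h; apply ha1; linear_combination h
    have hs0 : s ≠ 0 := by
      intro h; rw [h] at hs; simp at hs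
    rw [hA, ← neg_div, inv_div, div_neg]
    have hc0 : (c:ℂ) ≠ 0 := by exact_mod_cast hc.ne'
    field_simp
    have hXi : (1 + (c:ℂ)*s)⁻¹ * (1 + (c:ℂ)*s) = 1 := inv_mul_cancel₀ h1A
    linear_combination -hXi
  rw [hEq]
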